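/- Let R be a commutative G-graded ring. Then R is graded radically principal if and only if every graded prime ideal of R is graded radically principal. -/

import Mathlib

open DirectSum

variable {G A : Type*} [AddGroup G] [DecidableEq G] [CommRing A]

def gradedRadical (𝒜 : G → AddSubgroup A) [GradedRing 𝒜] (I : Ideal A) : Set A :=
  {x | ∀ g : G, ∃ n : ℕ, ((DirectSum.decompose 𝒜 x g : A)) ^ n ∈ I}

def IsGradedRadicallyPrincipal (𝒜 : G → AddSubgroup A) [GradedRing 𝒜] (I : Ideal A) : Prop :=
  ∃ c : A, SetLike.IsHomogeneousElem 𝒜 c ∧ gradedRadical 𝒜 I = gradedRadical 𝒜 (Ideal.span {c})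

def GradedRadicallyPrincipalRing (𝒜 : G → AddSubgroup A) [GradedRing 𝒜] : Prop :=
  ∀ I : Ideal A, I.IsHomogeneous 𝒜 → IsGradedRadicallyPrincipal 𝒜 I

def IsGradedPrime (𝒜 : G → AddSubgroup A) [GradedRing 𝒜] (P : Ideal A) : Prop :=
  P ≠ ⊤ ∧ P.IsHomogeneous 𝒜 ∧
    ∀ ⦃x y : A⦄, SetLike.IsHomogeneousElem 𝒜 x → SetLike.IsHomogeneousElem 𝒜 y → x * y ∈ P →
      x ∈ P ∨ y ∈ P

section Aux

variable (𝒜 : G → AddSubgroup A) [GradedRing 𝒜]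

lemma gradedRadical_mono {I J : Ideal A} (h : I ≤ J) :
    gradedRadical 𝒜 I ⊆ gradedRadical 𝒜 J := by
  intro x hx g
  obtain ⟨n, hn⟩ := hx g
  exact ⟨n, h hn⟩

lemma homog_mem_gradedRadical_iff {c : A} (hc : SetLike.IsHomogeneousElem 𝒜 c) {I : Ideal A} :
    c ∈ gradedRadical 𝒜 I ↔ ∃ n : ℕ, c ^ n ∈ I := by
  obtain ⟨d, hd⟩ := hc
  constructor
  · intro h
    obtain ⟨n, hn⟩ := h d
    rw [DirectSum.decompose_of_mem_same 𝒜 hd] at hn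
    exact ⟨n, hn⟩
  · rintro ⟨n, hn⟩ g
    by_cases hg : g = d
    · subst hg
      rw [DirectSum.decompose_of_mem_same 𝒜 hd]
      exact ⟨n, hn⟩
    · rw [DirectSum.decompose_of_mem_ne 𝒜 hd (Ne.symm hg)]
      exact ⟨1, by simp⟩

lemma pow_mem_gradedRadical_span {c : A} {N : ℕ} {I : Ideal A} (hN : c ^ N ∈ I) :
    gradedRadical 𝒜 (Ideal.span {c}) ⊆ gradedRadical 𝒜 I := by
  intro x hx g
  obtain ⟨n, hn⟩ := hx g
  rw [Ideal.mem_span_singleton] at hn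
  refine ⟨n * N, ?_⟩
  rw [pow_mul]
  obtain ⟨e, he⟩ := pow_dvd_pow_of_dvd hn N
  rw [he]
  exact I.mul_mem_right e hN

lemma colon_isHomogeneous {P : Ideal A} (hP : P.IsHomogeneous 𝒜) {y : A}
    (hy : SetLike.IsHomogeneousElem 𝒜 y) : (P.colon (Ideal.span {y})).IsHomogeneous 𝒜 := by
  obtain ⟨d, hd⟩ := hy
  intro g r hr
  rw [Ideal.mem_colon_span_singleton] at hr ⊢
  have := hP (g + d) hr
  rwa [DirectSum.coe_decompose_mul_add_of_right_mem 𝒜 hd] at this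

end Aux

theorem stmt_7 (𝒜 : G → AddSubgroup A) [GradedRing 𝒜] :
    GradedRadicallyPrincipalRing 𝒜 ↔
      ∀ P : Ideal A, IsGradedPrime 𝒜 P → IsGradedRadicallyPrincipal 𝒜 P := by
  constructor
  · intro h P hP
    exact h P hP.2.1
  intro H I hIhom
  by_contra hnot
  set S : Set (Ideal A) :=
    {J : Ideal A | J.IsHomogeneous 𝒜 ∧ ¬ IsGradedRadicallyPrincipal 𝒜 J} with hS
  have hzorn : ∀ c ⊆ S, IsChain (· ≤ ·) c → ∀ y ∈ c,
      ∃ ub ∈ S, ∀ z ∈ c, z ≤ ub := by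
    intro c hcS hchain y hy
    refine ⟨sSup c, ⟨Ideal.IsHomogeneous.sSup fun J hJ => (hcS hJ).1, ?_⟩,
      fun z hz => le_sSup hz⟩
    rintro ⟨a, ha_hom, heq⟩
    have hmem : a ∈ gradedRadical 𝒜 (sSup c) := by
      rw [heq, homog_mem_gradedRadical_iff 𝒜 ha_hom]
      exact ⟨1, by simpa using Ideal.mem_span_singleton_self a⟩
    rw [homog_mem_gradedRadical_iff 𝒜 ha_hom] at hmem
    obtain ⟨n, hn⟩ := hmem
    have hn1 : a ^ (n + 1) ∈ sSup c := by
      rw [pow_succ]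
      exact (sSup c).mul_mem_right a hn
    obtain ⟨J, hJc, haJ⟩ :=
      (Submodule.mem_sSup_of_directed ⟨y, hy⟩ hchain.directedOn).1 hn1
    refine (hcS hJc).2 ⟨a, ha_hom, Set.Subset.antisymm ?_ ?_⟩
    · exact (gradedRadical_mono 𝒜 (le_sSup hJc)).trans heq.le
    · exact pow_mem_gradedRadical_span 𝒜 haJ
  obtain ⟨P, _, hPmax⟩ := zorn_le_nonempty₀ S hzorn I ⟨hIhom, hnot⟩
  obtain ⟨hPhom, hPnot⟩ := hPmax.prop
  -- P is graded prime
  have hPtop : P ≠ ⊤ := by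
    rintro rfl
    exact hPnot ⟨1, SetLike.isHomogeneousElem_one 𝒜, by rw [Ideal.span_singleton_one]⟩
  have hPprime : ∀ ⦃x y : A⦄, SetLike.IsHomogeneousElem 𝒜 x → SetLike.IsHomogeneousElem 𝒜 y →
      x * y ∈ P → x ∈ P ∨ y ∈ P := by
    intro x y hx hy hxy
    by_contra hcon
    push_neg at hcon
    obtain ⟨hxP, hyP⟩ := hcon
    set J : Ideal A := P ⊔ Ideal.span {y} with hJ
    set K : Ideal A := P.colon (Ideal.span {y}) with hK
    have hPJ : P < J := lt_of_le_of_ne le_sup_left (by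
      intro h
      exact hyP (h ▸ Ideal.mem_sup_right (Ideal.mem_span_singleton_self y)))
    have hPK : P < K := lt_of_le_of_ne
      (fun p hp => Ideal.mem_colon_span_singleton.2 (P.mul_mem_right y hp))
      (by
        intro h
        exact hxP (h ▸ Ideal.mem_colon_span_singleton.2 hxy))
    have hJhom : J.IsHomogeneous 𝒜 :=
      hPhom.sup (Ideal.homogeneous_span 𝒜 {y} (by simpa using hy))
    have hKhom : K.IsHomogeneous 𝒜 := colon_isHomogeneous 𝒜 hPhom hy
    have hJrp : IsGradedRadicallyPrincipal 𝒜 J := by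
      by_contra h
      exact (hPmax.not_prop_of_gt hPJ) ⟨hJhom, h⟩
    have hKrp : IsGradedRadicallyPrincipal 𝒜 K := by
      by_contra h
      exact (hPmax.not_prop_of_gt hPK) ⟨hKhom, h⟩
    obtain ⟨c, hc_hom, hJc⟩ := hJrp
    obtain ⟨d, hd_hom, hKd⟩ := hKrp
    -- J * K ≤ P
    have hJK : ∀ r ∈ J, ∀ s ∈ K, r * s ∈ P := by
      intro r hr s hs
      rw [hJ, Submodule.mem_sup] at hr
      obtain ⟨p, hp, q, hq, rfl⟩ := hr
      rw [Ideal.mem_span_singleton'] at hq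
      obtain ⟨t, rfl⟩ := hq
      have hsy : s * y ∈ P := Ideal.mem_colon_span_singleton.1 hs
      have : t * y * s = t * (s * y) := by ring
      rw [add_mul, this]
      exact P.add_mem (P.mul_mem_right s hp) (P.mul_mem_left t hsy)
    -- c^n ∈ J, d^m ∈ K for some n, m
    have hcJ : ∃ n : ℕ, c ^ n ∈ J := by
      rw [← homog_mem_gradedRadical_iff 𝒜 hc_hom, hJc]
      rw [homog_mem_gradedRadical_iff 𝒜 hc_hom]
      exact ⟨1, by simpa using Ideal.mem_span_singleton_self c⟩
    have hdK : ∃ m : ℕ, d ^ m ∈ K := by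
      rw [← homog_mem_gradedRadical_iff 𝒜 hd_hom, hKd]
      rw [homog_mem_gradedRadical_iff 𝒜 hd_hom]
      exact ⟨1, by simpa using Ideal.mem_span_singleton_self d⟩
    obtain ⟨n, hn⟩ := hcJ
    obtain ⟨m, hm⟩ := hdK
    have hcdP : (c * d) ^ (n + m) ∈ P := by
      have h1 : c ^ n * d ^ m ∈ P := hJK _ hn _ hm
      have : (c * d) ^ (n + m) = (c ^ n * d ^ m) * (c ^ m * d ^ n) := by
        rw [mul_pow, pow_add, pow_add]; ring
      rw [this]
      exact P.mul_mem_right _ h1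
    refine hPnot ⟨c * d, SetLike.IsHomogeneousElem.mul hc_hom hd_hom,
      Set.Subset.antisymm ?_ (pow_mem_gradedRadical_span 𝒜 hcdP)⟩
    -- gradedRadical P ⊆ gradedRadical (span {c*d})
    intro z hz
    have hzJ : z ∈ gradedRadical 𝒜 (Ideal.span {c}) :=
      hJc ▸ gradedRadical_mono 𝒜 hPJ.le hz
    have hzK : z ∈ gradedRadical 𝒜 (Ideal.span {d}) :=
      hKd ▸ gradedRadical_mono 𝒜 hPK.le hz
    intro g
    obtain ⟨a, ha⟩ := hzJ g
    obtain ⟨b, hb⟩ := hzK g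
    rw [Ideal.mem_span_singleton] at ha hb
    refine ⟨a + b, ?_⟩
    rw [Ideal.mem_span_singleton, pow_add]
    exact mul_dvd_mul ha hb
  exact hPnot (H P ⟨hPtop, hPhom, hPprime⟩)
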